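/- Let g be C¹ near 0 with g(0)=0, g'(0)=λ²>0, G its potential, X defined by X²=2G, xX>0 for x≠0, and f continuous on [0,η]. If (X(x)/g(x))' = f(X(x)²/2)X'(x) for |x| small, then for |x| small X(x)/g(x) = 1/λ + ∫₀^{X(x)} f(q²/2) dq. -/

import Mathlib

open Set Filter MeasureTheory intervalIntegral

theorem stmt_3 (ε lam η : ℝ) (hε : 0 < ε) (hlam : 0 < lam) (hη : 0 < η)
    (g G X f : ℝ → ℝ)
    (hg : ContDiffOn ℝ 1 g (Ioo (-ε) ε))
    (hg0 : g 0 = 0) (hg'0 : deriv g 0 = lam ^ 2)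
    (hG : ∀ x, G x = ∫ u in (0:ℝ)..x, g u)
    (hXcont : ∀ᶠ x in nhds (0:ℝ), ContinuousAt X x)
    (hX2 : ∀ᶠ x in nhds (0:ℝ), (X x) ^ 2 = 2 * G x)
    (hXsgn : ∀ᶠ x in nhds (0:ℝ), x ≠ 0 → 0 < x * X x)
    (hf : ContinuousOn f (Icc 0 η))
    (hEq : ∀ᶠ x in nhds (0:ℝ), x ≠ 0 →
      HasDerivAt (fun y => X y / g y) (f ((X x) ^ 2 / 2) * deriv X x) x) :
    ∃ δ > 0, ∀ x, |x| < δ → x ≠ 0 →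
      X x / g x = 1 / lam + ∫ q in (0:ℝ)..(X x), f (q ^ 2 / 2) := by
  have hmem0 : (0:ℝ) ∈ Ioo (-ε) ε := ⟨by linarith, hε⟩
  have hopen : IsOpen (Ioo (-ε) ε) := isOpen_Ioo
  have hgc : ContinuousOn g (Ioo (-ε) ε) := hg.continuousOn
  have hg'c : ContinuousOn (deriv g) (Ioo (-ε) ε) :=
    hg.continuousOn_deriv_of_isOpen hopen le_rfl
  have hGd : ∀ x ∈ Ioo (-ε) ε, HasDerivAt G (g x) x := by
    intro x hx
    have hsub : uIcc (0:ℝ) x ⊆ Ioo (-ε) ε :=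
      (ordConnected_Ioo).uIcc_subset hmem0 hx
    have hint : IntervalIntegrable g volume 0 x :=
      (hgc.mono hsub).intervalIntegrable
    have hmeas : StronglyMeasurableAtFilter g (nhds x) volume :=
      hgc.stronglyMeasurableAtFilter hopen x hx
    have hca : ContinuousAt g x := hgc.continuousAt (hopen.mem_nhds hx)
    exact (intervalIntegral.integral_hasDerivAt_right hint hmeas hca).congr_of_eventuallyEq
      (Eventually.of_forall hG)
  have hG0 : G 0 = 0 := by rw [hG]; simp
  have hg'at0 : ContinuousAt (deriv g) 0 := hg'c.continuousAt (hopen.mem_nhds hmem0)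
  have hg'pos : ∀ᶠ x in nhds (0:ℝ), 0 < deriv g x := by
    have h1 : Tendsto (deriv g) (nhds 0) (nhds (lam ^ 2)) := by
      rw [← hg'0]; exact hg'at0.tendsto
    exact h1.eventually (eventually_gt_nhds (by positivity))
  have hGcont0 : ContinuousAt G 0 := (hGd 0 hmem0).continuousAt
  have hGsmall : ∀ᶠ x in nhds (0:ℝ), G x < η := by
    have : Tendsto G (nhds 0) (nhds 0) := by simpa [hG0] using hGcont0.tendsto
    exact this.eventually (eventually_lt_nhds hη)
  have hbig : ∀ᶠ x in nhds (0:ℝ), x ∈ Ioo (-ε) ε ∧ ContinuousAt X x ∧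
      (X x) ^ 2 = 2 * G x ∧ (x ≠ 0 → 0 < x * X x) ∧
      (x ≠ 0 → HasDerivAt (fun y => X y / g y) (f ((X x) ^ 2 / 2) * deriv X x) x) ∧
      0 < deriv g x ∧ G x < η := by
    filter_upwards [hopen.eventually_mem hmem0, hXcont, hX2, hXsgn, hEq, hg'pos, hGsmall] with
      x h1 h2 h3 h4 h5 h6 h7
    exact ⟨h1, h2, h3, h4, h5, h6, h7⟩
  obtain ⟨δ, hδ, hPδ⟩ := Metric.eventually_nhds_iff.mp hbig
  have hP : ∀ x, |x| < δ → x ∈ Ioo (-ε) ε ∧ ContinuousAt X x ∧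
      (X x) ^ 2 = 2 * G x ∧ (x ≠ 0 → 0 < x * X x) ∧
      (x ≠ 0 → HasDerivAt (fun y => X y / g y) (f ((X x) ^ 2 / 2) * deriv X x) x) ∧
      0 < deriv g x ∧ G x < η := by
    intro x hx
    exact hPδ (by rwa [Real.dist_0_eq_abs])
  -- strict monotonicity and signs
  have hsub : Ioo (-δ) δ ⊆ Ioo (-ε) ε := fun x hx => (hP x (abs_lt.mpr hx)).1
  have hmono : StrictMonoOn g (Ioo (-δ) δ) := by
    apply strictMonoOn_of_deriv_pos (convex_Ioo _ _) (hgc.mono hsub)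
    intro x hx
    rw [interior_Ioo] at hx
    exact (hP x (abs_lt.mpr hx)).2.2.2.2.2.1
  have h0δ : (0:ℝ) ∈ Ioo (-δ) δ := ⟨by linarith, hδ⟩
  have hgsign : ∀ x, |x| < δ → x ≠ 0 → 0 < x * g x := by
    intro x hx hx0
    rcases hx0.lt_or_gt with hneg | hpos
    · have : g x < g 0 := hmono (abs_lt.mp hx) h0δ hneg
      rw [hg0] at this
      exact mul_pos_of_neg_of_neg hneg this
    · have : g 0 < g x := hmono h0δ (abs_lt.mp hx) hpos
      rw [hg0] at this
      exact mul_pos hpos this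
  have hXne : ∀ x, |x| < δ → x ≠ 0 → X x ≠ 0 := by
    intro x hx hx0 h
    have := (hP x hx).2.2.2.1 hx0
    rw [h, mul_zero] at this
    exact lt_irrefl 0 this
  have hGpos : ∀ x, |x| < δ → x ≠ 0 → 0 < G x := by
    intro x hx hx0
    have h2 := (hP x hx).2.2.1
    have hXp : 0 < (X x) ^ 2 :=
      lt_of_le_of_ne (sq_nonneg _) (Ne.symm (pow_ne_zero 2 (hXne x hx hx0)))
    linarith
  -- X as sqrt
  have hXpos : ∀ x, |x| < δ → 0 < x → X x = Real.sqrt (2 * G x) := by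
    intro x hx hxp
    have hs := (hP x hx).2.2.2.1 (ne_of_gt hxp)
    have hXp : 0 < X x := by nlinarith
    rw [← (hP x hx).2.2.1, Real.sqrt_sq hXp.le]
  have hXneg : ∀ x, |x| < δ → x < 0 → X x = -Real.sqrt (2 * G x) := by
    intro x hx hxn
    have hs := (hP x hx).2.2.2.1 (ne_of_lt hxn)
    have hXn : X x < 0 := by nlinarith
    rw [← (hP x hx).2.2.1, Real.sqrt_sq_eq_abs, abs_of_neg hXn, neg_neg]
  -- derivative of X
  have hXd : ∀ x, |x| < δ → x ≠ 0 → HasDerivAt X (g x / X x) x := by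
    intro x hx hx0
    have hGx := hGpos x hx hx0
    have h2G : (2:ℝ) * G x ≠ 0 := by positivity
    have hsqrtpos : 0 < Real.sqrt (2 * G x) := Real.sqrt_pos.mpr (by linarith)
    have hsq : HasDerivAt (fun y => Real.sqrt (2 * G y)) (g x / Real.sqrt (2 * G x)) x := by
      have hd : HasDerivAt (fun y => 2 * G y) (2 * g x) x := (hGd x ((hP x hx).1)).const_mul 2
      have h := (Real.hasDerivAt_sqrt h2G).comp x hd
      refine h.congr_deriv ?_
      ring
    rcases hx0.lt_or_gt with hneg | hpos
    · have hXloc : X =ᶠ[nhds x] fun y => -Real.sqrt (2 * G y) := by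
        have hmem : Ioo (-δ) 0 ∈ nhds x := isOpen_Ioo.mem_nhds ⟨(abs_lt.mp hx).1, hneg⟩
        filter_upwards [hmem] with y hy
        exact hXneg y (abs_lt.mpr ⟨hy.1, hy.2.trans hδ⟩) hy.2
      have hd := hsq.neg.congr_of_eventuallyEq hXloc
      have : -(g x / Real.sqrt (2 * G x)) = g x / X x := by
        rw [hXneg x hx hneg, div_neg]
      rwa [this] at hd
    · have hXloc : X =ᶠ[nhds x] fun y => Real.sqrt (2 * G y) := by
        have hmem : Ioo (0:ℝ) δ ∈ nhds x := isOpen_Ioo.mem_nhds ⟨hpos, (abs_lt.mp hx).2⟩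
        filter_upwards [hmem] with y hy
        exact hXpos y (abs_lt.mpr ⟨by linarith [hy.1], hy.2⟩) hy.1
      have hd := hsq.congr_of_eventuallyEq hXloc
      rwa [hXpos x hx hpos]
  have hXderiv : ∀ x, |x| < δ → x ≠ 0 → deriv X x = g x / X x := fun x hx h0 => (hXd x hx h0).deriv
  -- derivative of F is zero
  have hFd : ∀ x, |x| < δ → x ≠ 0 →
      HasDerivAt (fun y => X y / g y - ∫ q in (0:ℝ)..(X y), f (q ^ 2 / 2)) 0 x := by
    intro x hx hx0
    have hGx := hGpos x hx hx0
    have hGxη : G x < η := (hP x hx).2.2.2.2.2.2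
    have hXsq : (X x) ^ 2 / 2 = G x := by have := (hP x hx).2.2.1; linarith
    have hφint : IntervalIntegrable (fun q => f (q ^ 2 / 2)) volume 0 (X x) := by
      apply ContinuousOn.intervalIntegrable
      apply hf.comp (Continuous.continuousOn (by fun_prop))
      intro q hq
      refine ⟨by positivity, ?_⟩
      have h1 : |q| ≤ |X x| := by
        rcases le_total 0 (X x) with h | h
        · rw [uIcc_of_le h] at hq
          rw [abs_of_nonneg hq.1, abs_of_nonneg h]; exact hq.2
        · rw [uIcc_of_ge h] at hq
          rw [abs_of_nonpos hq.2, abs_of_nonpos h]; linarith [hq.1]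
      have h2 : q ^ 2 ≤ (X x) ^ 2 := by
        rw [← sq_abs q, ← sq_abs (X x)]
        exact pow_le_pow_left₀ (abs_nonneg q) h1 2
      linarith
    have hsqc : Continuous fun q : ℝ => q ^ 2 / 2 := by fun_prop
    have hφcont : ContinuousAt (fun q => f (q ^ 2 / 2)) (X x) := by
      have hfc : ContinuousAt f ((X x) ^ 2 / 2) := by
        apply hf.continuousAt
        rw [hXsq]
        exact Icc_mem_nhds hGx hGxη
      exact ContinuousAt.comp hfc hsqc.continuousAt
    have hφmeas : StronglyMeasurableAtFilter (fun q => f (q ^ 2 / 2)) (nhds (X x)) volume := by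
      have hUopen : IsOpen {q : ℝ | q ^ 2 / 2 ∈ Ioo 0 η} :=
        (isOpen_Ioo).preimage (by fun_prop)
      have hφU : ContinuousOn (fun q => f (q ^ 2 / 2)) {q : ℝ | q ^ 2 / 2 ∈ Ioo 0 η} := by
        intro q hq
        have h1 : ContinuousAt (f ∘ fun q : ℝ => q ^ 2 / 2) q :=
          ContinuousAt.comp (hf.continuousAt (Icc_mem_nhds hq.1 hq.2)) hsqc.continuousAt
        exact h1.continuousWithinAt
      exact hφU.stronglyMeasurableAtFilter hUopen (X x) (by rw [mem_setOf_eq, hXsq]; exact ⟨hGx, hGxη⟩)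
    have hH : HasDerivAt (fun t => ∫ q in (0:ℝ)..t, f (q ^ 2 / 2)) (f ((X x) ^ 2 / 2)) (X x) :=
      intervalIntegral.integral_hasDerivAt_right hφint hφmeas hφcont
    have hcomp : HasDerivAt (fun y => ∫ q in (0:ℝ)..(X y), f (q ^ 2 / 2))
        (f ((X x) ^ 2 / 2) * (g x / X x)) x := hH.comp x (hXd x hx hx0)
    have hXg := (hP x hx).2.2.2.2.1 hx0
    rw [hXderiv x hx hx0] at hXg
    have h := hXg.sub hcomp
    rw [sub_self] at h
    exact h
  -- facts on the punctured neighborhood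
  have hne : ∀ᶠ x in nhdsWithin (0:ℝ) {(0:ℝ)}ᶜ, x ≠ 0 := by
    filter_upwards [self_mem_nhdsWithin] with x hx
    exact hx
  have hsmall : ∀ᶠ x in nhdsWithin (0:ℝ) {(0:ℝ)}ᶜ, |x| < δ := by
    apply eventually_nhdsWithin_of_eventually_nhds
    have : Tendsto (fun x : ℝ => |x|) (nhds 0) (nhds 0) := by
      simpa using (continuous_abs.tendsto (0:ℝ))
    exact this.eventually (eventually_lt_nhds hδ)
  -- L'Hopital: 2G/g² → 1/lam²
  have hlam2 : lam ^ 2 ≠ 0 := by positivity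
  have hLH : Tendsto (fun x => 2 * G x / (g x) ^ 2) (nhdsWithin (0:ℝ) {(0:ℝ)}ᶜ)
      (nhds (1 / lam ^ 2)) := by
    have hgd : ∀ x, |x| < δ → HasDerivAt g (deriv g x) x := by
      intro x hx
      exact ((hg.differentiableOn one_ne_zero).differentiableAt
        (hopen.mem_nhds ((hP x hx).1))).hasDerivAt
    apply HasDerivAt.lhopital_zero_nhdsNE (f' := fun x => 2 * g x)
      (g' := fun x => 2 * g x * deriv g x)
    · filter_upwards [hsmall] with x hx
      exact ((hGd x ((hP x hx).1)).const_mul 2)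
    · filter_upwards [hsmall] with x hx
      have h := ((hgd x hx).pow 2)
      refine h.congr_deriv ?_
      norm_num
    · filter_upwards [hsmall, hne] with x hx hx0
      have h1 : g x ≠ 0 := by
        intro h
        have := hgsign x hx hx0
        rw [h, mul_zero] at this
        exact lt_irrefl 0 this
      have h2 : deriv g x ≠ 0 := ne_of_gt (hP x hx).2.2.2.2.2.1
      positivity
    · apply tendsto_nhdsWithin_of_tendsto_nhds
      have : Tendsto G (nhds 0) (nhds 0) := by simpa [hG0] using hGcont0.tendsto
      simpa using (this.const_mul 2)
    · apply tendsto_nhdsWithin_of_tendsto_nhds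
      have hgc0 : Tendsto g (nhds 0) (nhds 0) := by
        have := (hgc.continuousAt (hopen.mem_nhds hmem0)).tendsto
        rwa [hg0] at this
      simpa using hgc0.pow 2
    · have h1 : Tendsto (fun x => 1 / deriv g x) (nhdsWithin (0:ℝ) {(0:ℝ)}ᶜ)
          (nhds (1 / lam ^ 2)) := by
        apply tendsto_nhdsWithin_of_tendsto_nhds
        apply Tendsto.div tendsto_const_nhds _ hlam2
        rw [← hg'0]
        exact hg'at0.tendsto
      apply h1.congr'
      filter_upwards [hsmall, hne] with x hx hx0
      have h1 : g x ≠ 0 := by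
        intro h
        have := hgsign x hx hx0
        rw [h, mul_zero] at this
        exact lt_irrefl 0 this
      have h2 : deriv g x ≠ 0 := ne_of_gt (hP x hx).2.2.2.2.2.1
      field_simp
  -- X/g → 1/lam
  have hXg_lim : Tendsto (fun x => X x / g x) (nhdsWithin (0:ℝ) {(0:ℝ)}ᶜ) (nhds (1 / lam)) := by
    have hsq : Tendsto (fun x => Real.sqrt (2 * G x / (g x) ^ 2)) (nhdsWithin (0:ℝ) {(0:ℝ)}ᶜ)
        (nhds (Real.sqrt (1 / lam ^ 2))) :=
      (Real.continuous_sqrt.continuousAt.tendsto).comp hLH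
    have heq : Real.sqrt (1 / lam ^ 2) = 1 / lam := by
      rw [one_div, Real.sqrt_inv, Real.sqrt_sq hlam.le, one_div]
    rw [heq] at hsq
    apply hsq.congr'
    filter_upwards [hsmall, hne] with x hx hx0
    have hgne : g x ≠ 0 := by
      intro h
      have := hgsign x hx hx0
      rw [h, mul_zero] at this
      exact lt_irrefl 0 this
    have hq : 0 < X x / g x := by
      have h1 := hgsign x hx hx0
      have h2 := (hP x hx).2.2.2.1 hx0
      have hx2 : (0:ℝ) < x * x := by
        rcases hx0.lt_or_gt with h | h
        · exact mul_pos_of_neg_of_neg h h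
        · exact mul_pos h h
      have : X x / g x = (x * X x) / (x * g x) := by
        field_simp [ne_of_gt, hx0]
      rw [this]
      exact div_pos h2 h1
    have h2G : 2 * G x / (g x) ^ 2 = (X x / g x) ^ 2 := by
      rw [← (hP x hx).2.2.1, div_pow]
    rw [h2G, Real.sqrt_sq hq.le]
  -- integral term → 0
  have hint_lim : Tendsto (fun x => ∫ q in (0:ℝ)..(X x), f (q ^ 2 / 2))
      (nhdsWithin (0:ℝ) {(0:ℝ)}ᶜ) (nhds 0) := by
    set b := Real.sqrt (2 * η) with hb
    have hbpos : 0 < b := Real.sqrt_pos.mpr (by linarith)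
    have hb2 : b ^ 2 = 2 * η := Real.sq_sqrt (by linarith)
    have hsqc : Continuous fun q : ℝ => q ^ 2 / 2 := by fun_prop
    have hφcont : ContinuousOn (fun q => f (q ^ 2 / 2)) (Icc (-b) b) := by
      apply hf.comp hsqc.continuousOn
      intro q hq
      refine ⟨by positivity, ?_⟩
      have h2 : q ^ 2 ≤ b ^ 2 := sq_le_sq' hq.1 hq.2
      rw [hb2] at h2
      linarith
    have hbuIcc : uIcc (-b) b = Icc (-b) b := uIcc_of_le (by linarith)
    have h0mem : (0:ℝ) ∈ uIcc (-b) b := by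
      rw [hbuIcc]
      exact ⟨by linarith, hbpos.le⟩
    have hHint : IntervalIntegrable (fun q => f (q ^ 2 / 2)) volume (-b) b := by
      apply ContinuousOn.intervalIntegrable
      rwa [hbuIcc]
    have hHcont : ContinuousOn (fun t => ∫ q in (0:ℝ)..t, f (q ^ 2 / 2)) (uIcc (-b) b) :=
      intervalIntegral.continuousOn_primitive_interval' hHint h0mem
    have hHat0 : ContinuousAt (fun t => ∫ q in (0:ℝ)..t, f (q ^ 2 / 2)) 0 := by
      apply hHcont.continuousAt
      rw [hbuIcc]
      exact Icc_mem_nhds (by linarith) hbpos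
    have hX0 : X 0 = 0 := by
      have h2 := hX2.self_of_nhds
      have : X 0 ^ 2 = 0 := by rw [h2, hG0, mul_zero]
      exact pow_eq_zero_iff (by norm_num) |>.mp this
    have hXtendsto : Tendsto X (nhdsWithin (0:ℝ) {(0:ℝ)}ᶜ) (nhds 0) := by
      have hc := (hXcont.self_of_nhds).tendsto
      rw [hX0] at hc
      exact hc.mono_left nhdsWithin_le_nhds
    have h := hHat0.tendsto.comp hXtendsto
    simpa [Function.comp_def] using h
  have hFlim : Tendsto (fun x => X x / g x - ∫ q in (0:ℝ)..(X x), f (q ^ 2 / 2))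
      (nhdsWithin (0:ℝ) {(0:ℝ)}ᶜ) (nhds (1 / lam)) := by
    simpa using hXg_lim.sub hint_lim
  -- conclusion
  refine ⟨δ, hδ, ?_⟩
  intro x hx hx0
  have key : X x / g x - (∫ q in (0:ℝ)..(X x), f (q ^ 2 / 2)) = 1 / lam := by
    rcases hx0.lt_or_gt with hneg | hpos
    · -- x < 0
      have hconst : ∀ y, x ≤ y → y < 0 →
          X y / g y - (∫ q in (0:ℝ)..(X y), f (q ^ 2 / 2)) =
          X x / g x - (∫ q in (0:ℝ)..(X x), f (q ^ 2 / 2)) := by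
        intro y hxy hy
        have hmemδ : ∀ t ∈ Icc x y, |t| < δ ∧ t ≠ 0 := by
          intro t ht
          have h1 : -δ < t := lt_of_lt_of_le (abs_lt.mp hx).1 ht.1
          have h2 : t < δ := lt_trans (lt_of_le_of_lt ht.2 hy) hδ
          exact ⟨abs_lt.mpr ⟨h1, h2⟩, ne_of_lt (lt_of_le_of_lt ht.2 hy)⟩
        have hcont : ContinuousOn
            (fun y => X y / g y - ∫ q in (0:ℝ)..(X y), f (q ^ 2 / 2)) (Icc x y) := by
          intro t ht
          exact ((hFd t (hmemδ t ht).1 (hmemδ t ht).2).continuousAt).continuousWithinAt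
        have hderiv : ∀ t ∈ Ico x y, HasDerivWithinAt
            (fun y => X y / g y - ∫ q in (0:ℝ)..(X y), f (q ^ 2 / 2)) 0 (Ici t) t := by
          intro t ht
          exact (hFd t (hmemδ t ⟨ht.1, ht.2.le⟩).1 (hmemδ t ⟨ht.1, ht.2.le⟩).2).hasDerivWithinAt
        exact constant_of_has_deriv_right_zero hcont hderiv y ⟨hxy, le_refl y⟩
      have htend : Tendsto (fun y => X y / g y - ∫ q in (0:ℝ)..(X y), f (q ^ 2 / 2))
          (nhdsWithin (0:ℝ) (Iio 0))
          (nhds (X x / g x - ∫ q in (0:ℝ)..(X x), f (q ^ 2 / 2))) := by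
        apply Tendsto.congr' _ tendsto_const_nhds
        have hIoo : Ioo x 0 ∈ nhdsWithin (0:ℝ) (Iio 0) :=
          Ioo_mem_nhdsLT_of_mem ⟨hneg, le_refl 0⟩
        filter_upwards [hIoo] with y hy
        exact (hconst y hy.1.le hy.2).symm
      have hsub2 : Iio (0:ℝ) ⊆ {(0:ℝ)}ᶜ := fun y hy => ne_of_lt hy
      exact tendsto_nhds_unique htend (hFlim.mono_left (nhdsWithin_mono _ hsub2))
    · -- x > 0
      have hconst : ∀ y, 0 < y → y ≤ x →
          X y / g y - (∫ q in (0:ℝ)..(X y), f (q ^ 2 / 2)) =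
          X x / g x - (∫ q in (0:ℝ)..(X x), f (q ^ 2 / 2)) := by
        intro y hy hyx
        have hmemδ : ∀ t ∈ Icc y x, |t| < δ ∧ t ≠ 0 := by
          intro t ht
          have h1 : 0 < t := lt_of_lt_of_le hy ht.1
          have h2 : t < δ := lt_of_le_of_lt ht.2 (lt_of_le_of_lt (le_abs_self x) hx)
          exact ⟨abs_lt.mpr ⟨by linarith, h2⟩, ne_of_gt h1⟩
        have hcont : ContinuousOn
            (fun y => X y / g y - ∫ q in (0:ℝ)..(X y), f (q ^ 2 / 2)) (Icc y x) := by
          intro t ht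
          exact ((hFd t (hmemδ t ht).1 (hmemδ t ht).2).continuousAt).continuousWithinAt
        have hderiv : ∀ t ∈ Ico y x, HasDerivWithinAt
            (fun y => X y / g y - ∫ q in (0:ℝ)..(X y), f (q ^ 2 / 2)) 0 (Ici t) t := by
          intro t ht
          exact (hFd t (hmemδ t ⟨ht.1, ht.2.le⟩).1 (hmemδ t ⟨ht.1, ht.2.le⟩).2).hasDerivWithinAt
        exact (constant_of_has_deriv_right_zero hcont hderiv x ⟨hyx, le_refl x⟩).symm
      have htend : Tendsto (fun y => X y / g y - ∫ q in (0:ℝ)..(X y), f (q ^ 2 / 2))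
          (nhdsWithin (0:ℝ) (Ioi 0))
          (nhds (X x / g x - ∫ q in (0:ℝ)..(X x), f (q ^ 2 / 2))) := by
        apply Tendsto.congr' _ tendsto_const_nhds
        have hIoo : Ioo (0:ℝ) x ∈ nhdsWithin (0:ℝ) (Ioi 0) :=
          Ioo_mem_nhdsGT_of_mem ⟨le_refl 0, hpos⟩
        filter_upwards [hIoo] with y hy
        exact (hconst y hy.1 hy.2.le).symm
      have hsub2 : Ioi (0:ℝ) ⊆ {(0:ℝ)}ᶜ := fun y hy => ne_of_gt hy
      exact tendsto_nhds_unique htend (hFlim.mono_left (nhdsWithin_mono _ hsub2))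
  linarith [key]
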